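/- If G is a long-refinement graph on n ≥ 2 vertices, then in every non-stable partition π^i produced by Colour Refinement on G there is exactly one class C ∈ π^i that is unbalanced, i.e., exactly one class C such that there exists a class C' ∈ π^i with deg_{C'}(C) undefined (vertices of C have differing numbers of neighbours in C'). -/
import Mathlib


variable {V : Type*}

/-- Colour Refinement equivalence: `crRel G i u v` means `u` and `v` get the same colour
after `i` iterations of Colour Refinement on `G` (starting monochromatic). -/
def crRel (G : SimpleGraph V) : ℕ → V → V → Prop
  | 0 => fun _ _ => True
  | (i+1) => fun u v => crRel G i u v ∧ ∀ w : V,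
      Nat.card {x : V // G.Adj u x ∧ crRel G i x w} =
      Nat.card {x : V // G.Adj v x ∧ crRel G i x w}

/-- The colour class of `v` after `i` iterations. -/
def crClass (G : SimpleGraph V) (i : ℕ) (v : V) : Set V :=
  {u : V | crRel G i u v}

/-- The partition `π^i` induced by the colouring after `i` iterations. -/
def crPartition (G : SimpleGraph V) (i : ℕ) : Set (Set V) :=
  {C : Set V | ∃ v : V, C = crClass G i v}

/-- `G` is a long-refinement graph: Colour Refinement takes exactly `n - 1` iterations
to stabilise. -/
def IsLongRefinement [Fintype V] (G : SimpleGraph V) : Prop :=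
  (∀ i < Fintype.card V - 1, crPartition G (i+1) ≠ crPartition G i) ∧
  crPartition G (Fintype.card V) = crPartition G (Fintype.card V - 1)

/-- The degree of a vertex. -/
noncomputable def vdeg (G : SimpleGraph V) (v : V) : ℕ :=
  Nat.card {u : V // G.Adj v u}

/-- `degOn G C C' k` : every vertex of `C` has exactly `k` neighbours in `C'`,
i.e. `deg_{C'}(C) = k`. -/
def degOn (G : SimpleGraph V) (C C' : Set V) (k : ℕ) : Prop :=
  ∀ v ∈ C, Nat.card {x : V // x ∈ C' ∧ G.Adj v x} = k

/-- `C` is balanced with respect to `C'`: `deg_{C'}(C)` is defined. -/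
def BalancedWrt (G : SimpleGraph V) (C C' : Set V) : Prop :=
  ∃ k, degOn G C C' k

section Aux

variable (G : SimpleGraph V)

lemma crRel_refl : ∀ (i : ℕ) (v : V), crRel G i v v
  | 0, _ => trivial
  | (i+1), v => ⟨crRel_refl i v, fun _ => rfl⟩

lemma crRel_symm : ∀ (i : ℕ) {u v : V}, crRel G i u v → crRel G i v u
  | 0, _, _, _ => trivial
  | (i+1), _, _, h => ⟨crRel_symm i h.1, fun w => (h.2 w).symm⟩

lemma crRel_trans : ∀ (i : ℕ) {u v w : V}, crRel G i u v → crRel G i v w → crRel G i u w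
  | 0, _, _, _, _, _ => trivial
  | (i+1), _, _, _, h1, h2 => ⟨crRel_trans i h1.1 h2.1, fun x => (h1.2 x).trans (h2.2 x)⟩

lemma mem_crClass {i : ℕ} {u v : V} : u ∈ crClass G i v ↔ crRel G i u v := Iff.rfl

lemma crClass_eq_iff {i : ℕ} {u v : V} : crClass G i u = crClass G i v ↔ crRel G i u v := by
  constructor
  · intro h
    have hu : u ∈ crClass G i u := crRel_refl G i u
    rw [h] at hu; exact hu
  · intro h
    ext x
    exact ⟨fun hx => crRel_trans G i hx h, fun hx => crRel_trans G i hx (crRel_symm G i h)⟩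

lemma crClass_mem_crPartition (i : ℕ) (v : V) : crClass G i v ∈ crPartition G i := ⟨v, rfl⟩

/-- Counting neighbours in a colour class: the `degOn`-style count equals the
`crRel`-style count. -/
lemma card_aux {i : ℕ} (v w : V) :
    Nat.card {x : V // x ∈ crClass G i w ∧ G.Adj v x} =
    Nat.card {x : V // G.Adj v x ∧ crRel G i x w} :=
  Nat.card_congr (Equiv.subtypeEquivRight fun _ => and_comm)

lemma partition_eq_iff {i : ℕ} :
    crPartition G (i+1) = crPartition G i ↔ ∀ u v : V, crRel G i u v → crRel G (i+1) u v := by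
  constructor
  · intro h u v huv
    have hv : crClass G (i+1) v ∈ crPartition G i := by
      rw [← h]; exact ⟨v, rfl⟩
    obtain ⟨w, hw⟩ := hv
    have hvw : crRel G i v w := by
      have : v ∈ crClass G (i+1) v := crRel_refl G (i+1) v
      rw [hw] at this; exact this
    have hcl : crClass G (i+1) v = crClass G i v := by
      rw [hw]
      exact (crClass_eq_iff G).mpr (crRel_symm G i hvw)
    have : u ∈ crClass G i v := huv
    rw [← hcl] at this; exact this
  · intro h
    have hcl : ∀ v : V, crClass G (i+1) v = crClass G i v := by
      intro v; ext x
      exact ⟨fun hx => hx.1, fun hx => h x v hx⟩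
    ext C
    constructor
    · rintro ⟨v, rfl⟩; exact ⟨v, hcl v⟩
    · rintro ⟨v, rfl⟩; exact ⟨v, (hcl v).symm⟩

lemma stable_succ {i : ℕ} (h : ∀ u v : V, crRel G i u v → crRel G (i+1) u v) :
    ∀ u v : V, crRel G (i+1) u v → crRel G (i+2) u v := by
  intro u v hv
  refine ⟨hv, fun w => ?_⟩
  have e : ∀ a : V,
      Nat.card {x : V // G.Adj a x ∧ crRel G (i+1) x w} =
      Nat.card {x : V // G.Adj a x ∧ crRel G i x w} := fun a =>
    Nat.card_congr (Equiv.subtypeEquivRight fun x =>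
      and_congr_right fun _ => ⟨fun hx => hx.1, fun hx => h x w hx⟩)
  rw [e u, e v]
  exact hv.2 w

/-- If the partition does not change at step `i`, it never changes afterwards. -/
lemma stable_forever {i : ℕ} (h : crPartition G (i+1) = crPartition G i) :
    ∀ j, i ≤ j → crPartition G (j+1) = crPartition G j := by
  intro j hij
  obtain ⟨k, rfl⟩ := Nat.exists_eq_add_of_le hij
  induction k with
  | zero => exact h
  | succ k ih =>
    have hk : crPartition G (i + k + 1) = crPartition G (i + k) := by
      simpa [Nat.add_assoc] using ih (Nat.le_add_right _ _)
    have := stable_succ G ((partition_eq_iff G).mp hk)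
    have : crPartition G (i + k + 2) = crPartition G (i + k + 1) :=
      (partition_eq_iff G).mpr this
    simpa [Nat.add_assoc, Nat.add_comm, Nat.add_left_comm] using this

end Aux

section Count

variable [Fintype V] (G : SimpleGraph V)

open Classical in
/-- The colour classes after `i` iterations, as a finset. -/
noncomputable def crFinset (i : ℕ) : Finset (Set V) :=
  Finset.univ.image (crClass G i)

lemma crClass_mem_crFinset (i : ℕ) (v : V) : crClass G i v ∈ crFinset G i := by
  classical
  simp only [crFinset, Finset.mem_image]
  exact ⟨v, Finset.mem_univ v, rfl⟩

lemma mem_crFinset {i : ℕ} {C : Set V} : C ∈ crFinset G i ↔ C ∈ crPartition G i := by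
  classical
  simp only [crFinset, Finset.mem_image, crPartition, Set.mem_setOf_eq, eq_comm]
  constructor
  · rintro ⟨v, -, hv⟩; exact ⟨v, hv⟩
  · rintro ⟨v, hv⟩; exact ⟨v, Finset.mem_univ v, hv⟩

lemma card_crFinset_le (i : ℕ) : (crFinset G i).card ≤ Fintype.card V := by
  classical
  simpa [crFinset] using Finset.card_image_le (s := (Finset.univ : Finset V))
    (f := crClass G i)

lemma card_crFinset_pos [Nonempty V] (i : ℕ) : 1 ≤ (crFinset G i).card :=
  Finset.card_pos.mpr ⟨_, crClass_mem_crFinset G i (Classical.arbitrary V)⟩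

/-- The map sending a `π^{i+1}`-class to the `π^i`-class containing it. -/
def phiMap (i : ℕ) : Set V → Set V := fun C => {x | ∃ v ∈ C, crRel G i x v}

lemma phiMap_class (i : ℕ) (v : V) : phiMap G i (crClass G (i+1) v) = crClass G i v := by
  ext x
  constructor
  · rintro ⟨v', hv', hxv'⟩
    exact crRel_trans G i hxv' hv'.1
  · intro hx
    exact ⟨v, crRel_refl G (i+1) v, hx⟩

/-- Key counting step: if we can cover all `π^i`-classes by `π^{i+1}`-classes avoiding
a set `S` of `π^{i+1}`-classes, then `|π^{i+1}| ≥ |π^i| + |S|`. -/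
lemma card_step (i : ℕ) (S : Finset (Set V)) (hS : S ⊆ crFinset G (i+1))
    (hcov : ∀ w : V, ∃ v : V, crClass G i v = crClass G i w ∧ crClass G (i+1) v ∉ S) :
    (crFinset G i).card + S.card ≤ (crFinset G (i+1)).card := by
  classical
  have hsub : crFinset G i ⊆ (crFinset G (i+1) \ S).image (phiMap G i) := by
    intro C hC
    obtain ⟨w, hw⟩ := (mem_crFinset G).mp hC
    obtain ⟨v, hv1, hv2⟩ := hcov w
    refine Finset.mem_image.mpr ⟨crClass G (i+1) v, Finset.mem_sdiff.mpr
      ⟨crClass_mem_crFinset G (i+1) v, hv2⟩, ?_⟩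
    rw [phiMap_class, hv1, ← hw]
  have h1 : (crFinset G i).card ≤ (crFinset G (i+1) \ S).card :=
    le_trans (Finset.card_le_card hsub) Finset.card_image_le
  have h2 : (crFinset G (i+1) \ S).card = (crFinset G (i+1)).card - S.card :=
    Finset.card_sdiff_of_subset hS
  have h3 : S.card ≤ (crFinset G (i+1)).card := Finset.card_le_card hS
  omega

lemma card_step_one {i : ℕ} {u0 v0 : V} (hr : crRel G i u0 v0)
    (hnr : ¬ crRel G (i+1) u0 v0) :
    (crFinset G i).card + 1 ≤ (crFinset G (i+1)).card := by
  classical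
  have := card_step G i {crClass G (i+1) u0}
    (by simp only [Finset.singleton_subset_iff]; exact crClass_mem_crFinset G (i+1) u0)
    (fun w => ?_)
  · simpa using this
  by_cases hc : crRel G i w u0
  · refine ⟨v0, (crClass_eq_iff G).mpr (crRel_trans G i (crRel_symm G i hr)
      (crRel_symm G i hc)), ?_⟩
    simp only [Finset.mem_singleton]
    intro hEq
    exact hnr (crRel_symm G (i+1) ((crClass_eq_iff G).mp hEq))
  · refine ⟨w, rfl, ?_⟩
    simp only [Finset.mem_singleton]
    intro hEq
    exact hc ((crClass_eq_iff G).mp hEq).1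

lemma card_step_two {i : ℕ} {u0 v0 u1 v1 : V} (hr0 : crRel G i u0 v0)
    (hnr0 : ¬ crRel G (i+1) u0 v0) (hr1 : crRel G i u1 v1)
    (hnr1 : ¬ crRel G (i+1) u1 v1) (hne : ¬ crRel G i u0 u1) :
    (crFinset G i).card + 2 ≤ (crFinset G (i+1)).card := by
  classical
  have hcard : ({crClass G (i+1) u0, crClass G (i+1) u1} : Finset (Set V)).card = 2 := by
    rw [Finset.card_insert_of_notMem, Finset.card_singleton]
    simp only [Finset.mem_singleton]
    intro hEq
    exact hne ((crClass_eq_iff G).mp hEq).1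
  have := card_step G i {crClass G (i+1) u0, crClass G (i+1) u1}
    (by
      intro C hC
      simp only [Finset.mem_insert, Finset.mem_singleton] at hC
      rcases hC with rfl | rfl <;> exact crClass_mem_crFinset G (i+1) _)
    (fun w => ?_)
  · rw [hcard] at this; exact this
  by_cases h0 : crRel G i w u0
  · refine ⟨v0, (crClass_eq_iff G).mpr (crRel_trans G i (crRel_symm G i hr0)
      (crRel_symm G i h0)), ?_⟩
    simp only [Finset.mem_insert, Finset.mem_singleton, not_or]
    constructor
    · intro hEq
      exact hnr0 (crRel_symm G (i+1) ((crClass_eq_iff G).mp hEq))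
    · intro hEq
      exact hne (crRel_trans G i hr0 ((crClass_eq_iff G).mp hEq).1)
  · by_cases h1 : crRel G i w u1
    · refine ⟨v1, (crClass_eq_iff G).mpr (crRel_trans G i (crRel_symm G i hr1)
        (crRel_symm G i h1)), ?_⟩
      simp only [Finset.mem_insert, Finset.mem_singleton, not_or]
      constructor
      · intro hEq
        have : crRel G i v1 u0 := ((crClass_eq_iff G).mp hEq).1
        exact hne (crRel_trans G i (crRel_symm G i this) (crRel_symm G i hr1))
      · intro hEq
        exact hnr1 (crRel_symm G (i+1) ((crClass_eq_iff G).mp hEq))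
    · refine ⟨w, rfl, ?_⟩
      simp only [Finset.mem_insert, Finset.mem_singleton, not_or]
      exact ⟨fun hEq => h0 ((crClass_eq_iff G).mp hEq).1,
        fun hEq => h1 ((crClass_eq_iff G).mp hEq).1⟩

lemma exists_split {i : ℕ} (hns : crPartition G (i+1) ≠ crPartition G i) :
    ∃ u v : V, crRel G i u v ∧ ¬ crRel G (i+1) u v := by
  by_contra hc
  push_neg at hc
  exact hns ((partition_eq_iff G).mpr hc)

lemma chain_up (m : ℕ) (hstrict : ∀ j < m, crPartition G (j+1) ≠ crPartition G j) :
    ∀ b ≤ m, ∀ a ≤ b, (crFinset G a).card + (b - a) ≤ (crFinset G b).card := by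
  intro b
  induction b with
  | zero => intro _ a ha; interval_cases a; simp
  | succ b ih =>
    intro hb a ha
    rcases Nat.eq_or_lt_of_le ha with rfl | hlt
    · simp
    · have ha' : a ≤ b := Nat.lt_succ_iff.mp hlt
      have h1 := ih (by omega) a ha'
      obtain ⟨u, v, hr, hnr⟩ := exists_split G (hstrict b (by omega))
      have h2 := card_step_one G hr hnr
      omega

end Count

section Split

variable (G : SimpleGraph V)

lemma split_to_unbalanced {i : ℕ} {u0 v0 : V} (hr : crRel G i u0 v0)
    (hnr : ¬ crRel G (i+1) u0 v0) :
    ∃ C' ∈ crPartition G i, ¬ BalancedWrt G (crClass G i u0) C' := by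
  have hnr' : ¬ (crRel G i u0 v0 ∧ ∀ w : V,
      Nat.card {x : V // G.Adj u0 x ∧ crRel G i x w} =
      Nat.card {x : V // G.Adj v0 x ∧ crRel G i x w}) := hnr
  push_neg at hnr'
  obtain ⟨w, hw⟩ := hnr' hr
  refine ⟨crClass G i w, ⟨w, rfl⟩, ?_⟩
  rintro ⟨k, hk⟩
  have h1 := hk u0 (crRel_refl G i u0)
  have h2 := hk v0 (crRel_symm G i hr)
  rw [card_aux] at h1 h2
  exact hw (h1.trans h2.symm)

lemma unbalanced_to_split {i : ℕ} {u w : V}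
    (hub : ¬ BalancedWrt G (crClass G i u) (crClass G i w)) :
    ∃ v : V, crRel G i u v ∧ ¬ crRel G (i+1) u v := by
  have hub' : ¬ ∃ k, ∀ v ∈ crClass G i u,
      Nat.card {x : V // x ∈ crClass G i w ∧ G.Adj v x} = k := hub
  push_neg at hub'
  obtain ⟨v, hv, hne⟩ := hub' (Nat.card {x : V // x ∈ crClass G i w ∧ G.Adj u x})
  refine ⟨v, crRel_symm G i hv, fun hrel => ?_⟩
  have heq := hrel.2 w
  rw [← card_aux, ← card_aux] at heq
  exact hne heq.symm

end Split

/-- In a long-refinement graph, every non-stable partition `π^i` has exactly one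
unbalanced class. -/
theorem longRefinement_unique_unbalanced [Fintype V] (G : SimpleGraph V)
    (h : IsLongRefinement G) (hn : 2 ≤ Fintype.card V) (i : ℕ)
    (hns : crPartition G (i+1) ≠ crPartition G i) :
    ∃! C, C ∈ crPartition G i ∧ ∃ C' ∈ crPartition G i, ¬ BalancedWrt G C C' := by
  classical
  obtain ⟨hstrict, hstab⟩ := h
  set m := Fintype.card V - 1 with hm
  have hnm : Fintype.card V = m + 1 := by omega
  have him : i < m := by
    by_contra hge
    push_neg at hge
    have hst : crPartition G (m+1) = crPartition G m := by rw [← hnm]; exact hstab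
    exact hns (stable_forever G hst i hge)
  obtain ⟨u0, v0, hr0, hnr0⟩ := exists_split G hns
  refine ⟨crClass G i u0, ⟨⟨u0, rfl⟩, split_to_unbalanced G hr0 hnr0⟩, ?_⟩
  rintro C ⟨⟨u1, rfl⟩, C', ⟨w1, rfl⟩, hub⟩
  obtain ⟨v1, hr1, hnr1⟩ := unbalanced_to_split G hub
  by_contra hne
  have hne' : ¬ crRel G i u0 u1 := fun hrel =>
    hne ((crClass_eq_iff G).mpr (crRel_symm G i hrel))
  have h2 := card_step_two G hr0 hnr0 hr1 hnr1 hne'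
  have hnonempty : Nonempty V := by
    have : 0 < Fintype.card V := by omega
    exact Fintype.card_pos_iff.mp this
  have hc0 : 1 ≤ (crFinset G 0).card := card_crFinset_pos G 0
  have hch1 := chain_up G m hstrict i (by omega) 0 (Nat.zero_le _)
  have hch2 := chain_up G m hstrict m (le_refl m) (i+1) (by omega)
  have hlast := card_crFinset_le G m
  omega
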